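/- Define the vector field 𝔔 = (𝔔_x, 𝔔_y) on ℝ² by 𝔔_x(x,y) = 2·cos x + 2·cos y + 2x·sin y + 2√3·sin(√3·x/2)·sin(y/2) − x·cos(√3·x/2)·sin(y/2) + √3·y·sin(√3·x/2)·cos(y/2) − 2·cos(x/2)·cos(√3·y/2) + √3·y·cos(x/2)·sin(√3·y/2) − 2√3·sin(x/2)·sin(√3·y/2) − 3x·sin(x/2)·cos(√3·y/2) − 2·cos(√3·x/2)·cos(y/2), and 𝔔_y(x,y) = 𝔔_x(y,x). Then 𝔔 satisfies the vector Helmholtz equation Δ𝔔 = −𝔔 (componentwise, i.e. Δ𝔔_x = −𝔔_x and Δ𝔔_y = −𝔔_y) and is solenoidal: ∂𝔔_x/∂x + ∂𝔔_y/∂y = 0. -/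

import Mathlib

noncomputable section

open Real

/-- Partial derivative in the `i`-th coordinate direction, on ℝ². -/
def pd2 (i : Fin 2) (F : (Fin 2 → ℝ) → ℝ) : (Fin 2 → ℝ) → ℝ :=
  fun v => deriv (fun t => F (Function.update v i t)) (v i)

/-- Laplacian of a scalar function on ℝ². -/
def lap2 (F : (Fin 2 → ℝ) → ℝ) : (Fin 2 → ℝ) → ℝ :=
  fun v => pd2 0 (pd2 0 F) v + pd2 1 (pd2 1 F) v

/-- Divergence of a vector field on ℝ². -/
def div2 (V : (Fin 2 → ℝ) → (Fin 2 → ℝ)) : (Fin 2 → ℝ) → ℝ :=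
  fun v => pd2 0 (fun w => V w 0) v + pd2 1 (fun w => V w 1) v

/-- The first component of the dihedral lambent field `𝔔`. -/
def Qx : ℝ → ℝ → ℝ := fun x y =>
  2 * Real.cos x + 2 * Real.cos y + 2 * x * Real.sin y
    + 2 * Real.sqrt 3 * Real.sin (Real.sqrt 3 * x / 2) * Real.sin (y / 2)
    - x * Real.cos (Real.sqrt 3 * x / 2) * Real.sin (y / 2)
    + Real.sqrt 3 * y * Real.sin (Real.sqrt 3 * x / 2) * Real.cos (y / 2)
    - 2 * Real.cos (x / 2) * Real.cos (Real.sqrt 3 * y / 2)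
    + Real.sqrt 3 * y * Real.cos (x / 2) * Real.sin (Real.sqrt 3 * y / 2)
    - 2 * Real.sqrt 3 * Real.sin (x / 2) * Real.sin (Real.sqrt 3 * y / 2)
    - 3 * x * Real.sin (x / 2) * Real.cos (Real.sqrt 3 * y / 2)
    - 2 * Real.cos (Real.sqrt 3 * x / 2) * Real.cos (y / 2)

/-- The dihedral lambent vector field `𝔔 = (𝔔ₓ(x,y), 𝔔ₓ(y,x))`. -/
def Qfield : (Fin 2 → ℝ) → (Fin 2 → ℝ) := fun v => ![Qx (v 0) (v 1), Qx (v 1) (v 0)]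

namespace DihedralQAux

/-- ∂Qx/∂x -/
def Dx : ℝ → ℝ → ℝ := fun x y =>
  -2 * Real.sin x + 2 * Real.sin y
    + (Real.sqrt 3 * Real.sqrt 3 - 1) * Real.cos (Real.sqrt 3 * x / 2) * Real.sin (y / 2)
    + Real.sqrt 3 / 2 * x * Real.sin (Real.sqrt 3 * x / 2) * Real.sin (y / 2)
    + Real.sqrt 3 * Real.sqrt 3 / 2 * y * Real.cos (Real.sqrt 3 * x / 2) * Real.cos (y / 2)
    - 2 * Real.sin (x / 2) * Real.cos (Real.sqrt 3 * y / 2)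
    - Real.sqrt 3 / 2 * y * Real.sin (x / 2) * Real.sin (Real.sqrt 3 * y / 2)
    - Real.sqrt 3 * Real.cos (x / 2) * Real.sin (Real.sqrt 3 * y / 2)
    - 3 / 2 * x * Real.cos (x / 2) * Real.cos (Real.sqrt 3 * y / 2)
    + Real.sqrt 3 * Real.sin (Real.sqrt 3 * x / 2) * Real.cos (y / 2)

/-- ∂Qx/∂y -/
def Dy : ℝ → ℝ → ℝ := fun x y =>
  -2 * Real.sin y + 2 * x * Real.cos y
    + 2 * Real.sqrt 3 * Real.sin (Real.sqrt 3 * x / 2) * Real.cos (y / 2)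
    - x / 2 * Real.cos (Real.sqrt 3 * x / 2) * Real.cos (y / 2)
    - Real.sqrt 3 / 2 * y * Real.sin (Real.sqrt 3 * x / 2) * Real.sin (y / 2)
    + 2 * Real.sqrt 3 * Real.cos (x / 2) * Real.sin (Real.sqrt 3 * y / 2)
    + Real.sqrt 3 * Real.sqrt 3 / 2 * y * Real.cos (x / 2) * Real.cos (Real.sqrt 3 * y / 2)
    - Real.sqrt 3 * Real.sqrt 3 * Real.sin (x / 2) * Real.cos (Real.sqrt 3 * y / 2)
    + 3 * Real.sqrt 3 / 2 * x * Real.sin (x / 2) * Real.sin (Real.sqrt 3 * y / 2)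
    + Real.cos (Real.sqrt 3 * x / 2) * Real.sin (y / 2)

/-- ∂²Qx/∂x² -/
def Dxx : ℝ → ℝ → ℝ := fun x y =>
  -2 * Real.cos x
    - (Real.sqrt 3 * Real.sqrt 3 * Real.sqrt 3 / 2 - Real.sqrt 3 / 2)
        * Real.sin (Real.sqrt 3 * x / 2) * Real.sin (y / 2)
    + Real.sqrt 3 / 2 * Real.sin (Real.sqrt 3 * x / 2) * Real.sin (y / 2)
    + Real.sqrt 3 * Real.sqrt 3 / 4 * x * Real.cos (Real.sqrt 3 * x / 2) * Real.sin (y / 2)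
    - Real.sqrt 3 * Real.sqrt 3 * Real.sqrt 3 / 4 * y
        * Real.sin (Real.sqrt 3 * x / 2) * Real.cos (y / 2)
    - Real.cos (x / 2) * Real.cos (Real.sqrt 3 * y / 2)
    - Real.sqrt 3 / 4 * y * Real.cos (x / 2) * Real.sin (Real.sqrt 3 * y / 2)
    + Real.sqrt 3 / 2 * Real.sin (x / 2) * Real.sin (Real.sqrt 3 * y / 2)
    - 3 / 2 * Real.cos (x / 2) * Real.cos (Real.sqrt 3 * y / 2)
    + 3 / 4 * x * Real.sin (x / 2) * Real.cos (Real.sqrt 3 * y / 2)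
    + Real.sqrt 3 * Real.sqrt 3 / 2 * Real.cos (Real.sqrt 3 * x / 2) * Real.cos (y / 2)

/-- ∂²Qx/∂y² -/
def Dyy : ℝ → ℝ → ℝ := fun x y =>
  -2 * Real.cos y - 2 * x * Real.sin y
    - Real.sqrt 3 * Real.sin (Real.sqrt 3 * x / 2) * Real.sin (y / 2)
    + x / 4 * Real.cos (Real.sqrt 3 * x / 2) * Real.sin (y / 2)
    - Real.sqrt 3 / 2 * Real.sin (Real.sqrt 3 * x / 2) * Real.sin (y / 2)
    - Real.sqrt 3 / 4 * y * Real.sin (Real.sqrt 3 * x / 2) * Real.cos (y / 2)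
    + Real.sqrt 3 * Real.sqrt 3 * Real.cos (x / 2) * Real.cos (Real.sqrt 3 * y / 2)
    + Real.sqrt 3 * Real.sqrt 3 / 2 * Real.cos (x / 2) * Real.cos (Real.sqrt 3 * y / 2)
    - Real.sqrt 3 * Real.sqrt 3 * Real.sqrt 3 / 4 * y
        * Real.cos (x / 2) * Real.sin (Real.sqrt 3 * y / 2)
    + Real.sqrt 3 * Real.sqrt 3 * Real.sqrt 3 / 2
        * Real.sin (x / 2) * Real.sin (Real.sqrt 3 * y / 2)
    + 3 * Real.sqrt 3 * Real.sqrt 3 / 4 * x * Real.sin (x / 2) * Real.cos (Real.sqrt 3 * y / 2)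
    + 1 / 2 * Real.cos (Real.sqrt 3 * x / 2) * Real.cos (y / 2)

lemma hsinb (b x : ℝ) :
    HasDerivAt (fun x => Real.sin (b * x / 2)) (Real.cos (b * x / 2) * (b * 1 / 2)) x :=
  by exact (Real.hasDerivAt_sin (b * x / 2)).comp x (((hasDerivAt_id x).const_mul b).div_const 2)

lemma hcosb (b x : ℝ) :
    HasDerivAt (fun x => Real.cos (b * x / 2)) (-Real.sin (b * x / 2) * (b * 1 / 2)) x :=
  by exact (Real.hasDerivAt_cos (b * x / 2)).comp x (((hasDerivAt_id x).const_mul b).div_const 2)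

lemma hsin2 (x : ℝ) :
    HasDerivAt (fun x => Real.sin (x / 2)) (Real.cos (x / 2) * (1 / 2)) x :=
  by exact (Real.hasDerivAt_sin (x / 2)).comp x ((hasDerivAt_id x).div_const 2)

lemma hcos2 (x : ℝ) :
    HasDerivAt (fun x => Real.cos (x / 2)) (-Real.sin (x / 2) * (1 / 2)) x :=
  by exact (Real.hasDerivAt_cos (x / 2)).comp x ((hasDerivAt_id x).div_const 2)


lemma hQx_x (y x : ℝ) : HasDerivAt (fun x => Qx x y) (Dx x y) x := by
  have hsx := hsinb (Real.sqrt 3) x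
  have hcx := hcosb (Real.sqrt 3) x
  have hs2 := hsin2 x
  have hc2 := hcos2 x
  have H1 := (Real.hasDerivAt_cos x).const_mul 2
  have H2 := H1.add (hasDerivAt_const x (2 * Real.cos y))
  have H3 := H2.add (((hasDerivAt_id x).const_mul 2).mul_const (Real.sin y))
  have H4 := H3.add ((hsx.const_mul (2 * Real.sqrt 3)).mul_const (Real.sin (y / 2)))
  have H5 := H4.sub (((hasDerivAt_id x).mul hcx).mul_const (Real.sin (y / 2)))
  have H6 := H5.add ((hsx.const_mul (Real.sqrt 3 * y)).mul_const (Real.cos (y / 2)))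
  have H7 := H6.sub ((hc2.const_mul 2).mul_const (Real.cos (Real.sqrt 3 * y / 2)))
  have H8 := H7.add ((hc2.const_mul (Real.sqrt 3 * y)).mul_const (Real.sin (Real.sqrt 3 * y / 2)))
  have H9 := H8.sub ((hs2.const_mul (2 * Real.sqrt 3)).mul_const (Real.sin (Real.sqrt 3 * y / 2)))
  have H10 := H9.sub ((((hasDerivAt_id x).const_mul 3).mul hs2).mul_const (Real.cos (Real.sqrt 3 * y / 2)))
  have H11 := H10.sub ((hcx.const_mul 2).mul_const (Real.cos (y / 2)))
  refine H11.congr_deriv ?_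
  simp only [Dx, id_eq]; ring

lemma hDx_x (y x : ℝ) : HasDerivAt (fun x => Dx x y) (Dxx x y) x := by
  have hsx := hsinb (Real.sqrt 3) x
  have hcx := hcosb (Real.sqrt 3) x
  have hs2 := hsin2 x
  have hc2 := hcos2 x
  have H1 := (Real.hasDerivAt_sin x).const_mul (-2)
  have H2 := H1.add (hasDerivAt_const x (2 * Real.sin y))
  have H3 := H2.add ((hcx.const_mul (Real.sqrt 3 * Real.sqrt 3 - 1)).mul_const (Real.sin (y / 2)))
  have H4 := H3.add ((((hasDerivAt_id x).const_mul (Real.sqrt 3 / 2)).mul hsx).mul_const (Real.sin (y / 2)))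
  have H5 := H4.add ((hcx.const_mul (Real.sqrt 3 * Real.sqrt 3 / 2 * y)).mul_const (Real.cos (y / 2)))
  have H6 := H5.sub ((hs2.const_mul 2).mul_const (Real.cos (Real.sqrt 3 * y / 2)))
  have H7 := H6.sub ((hs2.const_mul (Real.sqrt 3 / 2 * y)).mul_const (Real.sin (Real.sqrt 3 * y / 2)))
  have H8 := H7.sub ((hc2.const_mul (Real.sqrt 3)).mul_const (Real.sin (Real.sqrt 3 * y / 2)))
  have H9 := H8.sub ((((hasDerivAt_id x).const_mul (3 / 2)).mul hc2).mul_const (Real.cos (Real.sqrt 3 * y / 2)))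
  have H10 := H9.add ((hsx.const_mul (Real.sqrt 3)).mul_const (Real.cos (y / 2)))
  refine H10.congr_deriv ?_
  simp only [Dxx, id_eq]; ring

lemma hQx_y (x y : ℝ) : HasDerivAt (fun y => Qx x y) (Dy x y) y := by
  have hsy := hsinb (Real.sqrt 3) y
  have hcy := hcosb (Real.sqrt 3) y
  have hs2 := hsin2 y
  have hc2 := hcos2 y
  have H1 := hasDerivAt_const y (2 * Real.cos x)
  have H2 := H1.add ((Real.hasDerivAt_cos y).const_mul 2)
  have H3 := H2.add ((Real.hasDerivAt_sin y).const_mul (2 * x))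
  have H4 := H3.add (hs2.const_mul (2 * Real.sqrt 3 * Real.sin (Real.sqrt 3 * x / 2)))
  have H5 := H4.sub (hs2.const_mul (x * Real.cos (Real.sqrt 3 * x / 2)))
  have H6 := H5.add (((((hasDerivAt_id y).const_mul (Real.sqrt 3)).mul_const (Real.sin (Real.sqrt 3 * x / 2)))).mul hc2)
  have H7 := H6.sub (hcy.const_mul (2 * Real.cos (x / 2)))
  have H8 := H7.add (((((hasDerivAt_id y).const_mul (Real.sqrt 3)).mul_const (Real.cos (x / 2)))).mul hsy)
  have H9 := H8.sub (hsy.const_mul (2 * Real.sqrt 3 * Real.sin (x / 2)))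
  have H10 := H9.sub (hcy.const_mul (3 * x * Real.sin (x / 2)))
  have H11 := H10.sub (hc2.const_mul (2 * Real.cos (Real.sqrt 3 * x / 2)))
  refine H11.congr_deriv ?_
  simp only [Dy, id_eq]; ring

lemma hDy_y (x y : ℝ) : HasDerivAt (fun y => Dy x y) (Dyy x y) y := by
  have hsy := hsinb (Real.sqrt 3) y
  have hcy := hcosb (Real.sqrt 3) y
  have hs2 := hsin2 y
  have hc2 := hcos2 y
  have H1 := (Real.hasDerivAt_sin y).const_mul (-2)
  have H2 := H1.add ((Real.hasDerivAt_cos y).const_mul (2 * x))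
  have H3 := H2.add (hc2.const_mul (2 * Real.sqrt 3 * Real.sin (Real.sqrt 3 * x / 2)))
  have H4 := H3.sub (hc2.const_mul (x / 2 * Real.cos (Real.sqrt 3 * x / 2)))
  have H5 := H4.sub (((((hasDerivAt_id y).const_mul (Real.sqrt 3 / 2)).mul_const (Real.sin (Real.sqrt 3 * x / 2)))).mul hs2)
  have H6 := H5.add (hsy.const_mul (2 * Real.sqrt 3 * Real.cos (x / 2)))
  have H7 := H6.add (((((hasDerivAt_id y).const_mul (Real.sqrt 3 * Real.sqrt 3 / 2)).mul_const (Real.cos (x / 2)))).mul hcy)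
  have H8 := H7.sub (hcy.const_mul (Real.sqrt 3 * Real.sqrt 3 * Real.sin (x / 2)))
  have H9 := H8.add (hsy.const_mul (3 * Real.sqrt 3 / 2 * x * Real.sin (x / 2)))
  have H10 := H9.add (hs2.const_mul (Real.cos (Real.sqrt 3 * x / 2)))
  refine H10.congr_deriv ?_
  simp only [Dyy, id_eq]; ring


lemma sqrt3_sq : Real.sqrt 3 * Real.sqrt 3 = 3 := Real.mul_self_sqrt (by norm_num)

lemma helm (x y : ℝ) : Dxx x y + Dyy x y = -Qx x y := by
  simp only [Dxx, Dyy, Qx]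
  linear_combination
    (-(Real.sqrt 3 / 2) * Real.sin (Real.sqrt 3 * x / 2) * Real.sin (y / 2)
      + x / 4 * Real.cos (Real.sqrt 3 * x / 2) * Real.sin (y / 2)
      - Real.sqrt 3 / 4 * y * Real.sin (Real.sqrt 3 * x / 2) * Real.cos (y / 2)
      + 3 / 2 * Real.cos (x / 2) * Real.cos (Real.sqrt 3 * y / 2)
      - Real.sqrt 3 / 4 * y * Real.cos (x / 2) * Real.sin (Real.sqrt 3 * y / 2)
      + Real.sqrt 3 / 2 * Real.sin (x / 2) * Real.sin (Real.sqrt 3 * y / 2)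
      + 3 / 4 * x * Real.sin (x / 2) * Real.cos (Real.sqrt 3 * y / 2)
      + 1 / 2 * Real.cos (Real.sqrt 3 * x / 2) * Real.cos (y / 2)) * sqrt3_sq

lemma divzero (x y : ℝ) : Dx x y + Dx y x = 0 := by
  simp only [Dx]
  linear_combination
    (Real.cos (Real.sqrt 3 * x / 2) * Real.sin (y / 2)
      + Real.sin (x / 2) * Real.cos (Real.sqrt 3 * y / 2)
      + y / 2 * Real.cos (Real.sqrt 3 * x / 2) * Real.cos (y / 2)
      + x / 2 * Real.cos (x / 2) * Real.cos (Real.sqrt 3 * y / 2)) * sqrt3_sq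

-- partial derivative computations
lemma pd0_Q0 : pd2 0 (fun w => Qfield w 0) = fun w => Dx (w 0) (w 1) := by
  funext v
  have h : (fun t => (fun w => Qfield w 0) (Function.update v 0 t)) = fun t => Qx t (v 1) := by
    funext t; rfl
  simp only [pd2, h]
  exact (hQx_x (v 1) (v 0)).deriv

lemma pd1_Q0 : pd2 1 (fun w => Qfield w 0) = fun w => Dy (w 0) (w 1) := by
  funext v
  have h : (fun t => (fun w => Qfield w 0) (Function.update v 1 t)) = fun t => Qx (v 0) t := by
    funext t; rfl
  simp only [pd2, h]
  exact (hQx_y (v 0) (v 1)).deriv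

lemma pd0_Q1 : pd2 0 (fun w => Qfield w 1) = fun w => Dy (w 1) (w 0) := by
  funext v
  have h : (fun t => (fun w => Qfield w 1) (Function.update v 0 t)) = fun t => Qx (v 1) t := by
    funext t; rfl
  simp only [pd2, h]
  exact (hQx_y (v 1) (v 0)).deriv

lemma pd1_Q1 : pd2 1 (fun w => Qfield w 1) = fun w => Dx (w 1) (w 0) := by
  funext v
  have h : (fun t => (fun w => Qfield w 1) (Function.update v 1 t)) = fun t => Qx t (v 0) := by
    funext t; rfl
  simp only [pd2, h]
  exact (hQx_x (v 0) (v 1)).deriv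

lemma pd0_Dx : pd2 0 (fun w => Dx (w 0) (w 1)) = fun w => Dxx (w 0) (w 1) := by
  funext v
  have h : (fun t => (fun w : Fin 2 → ℝ => Dx (w 0) (w 1)) (Function.update v 0 t))
      = fun t => Dx t (v 1) := by funext t; rfl
  simp only [pd2, h]
  exact (hDx_x (v 1) (v 0)).deriv

lemma pd1_Dy : pd2 1 (fun w => Dy (w 0) (w 1)) = fun w => Dyy (w 0) (w 1) := by
  funext v
  have h : (fun t => (fun w : Fin 2 → ℝ => Dy (w 0) (w 1)) (Function.update v 1 t))
      = fun t => Dy (v 0) t := by funext t; rfl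
  simp only [pd2, h]
  exact (hDy_y (v 0) (v 1)).deriv

lemma pd0_Dy' : pd2 0 (fun w => Dy (w 1) (w 0)) = fun w => Dyy (w 1) (w 0) := by
  funext v
  have h : (fun t => (fun w : Fin 2 → ℝ => Dy (w 1) (w 0)) (Function.update v 0 t))
      = fun t => Dy (v 1) t := by funext t; rfl
  simp only [pd2, h]
  exact (hDy_y (v 1) (v 0)).deriv

lemma pd1_Dx' : pd2 1 (fun w => Dx (w 1) (w 0)) = fun w => Dxx (w 1) (w 0) := by
  funext v
  have h : (fun t => (fun w : Fin 2 → ℝ => Dx (w 1) (w 0)) (Function.update v 1 t))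
      = fun t => Dx t (v 0) := by funext t; rfl
  simp only [pd2, h]
  exact (hDx_x (v 0) (v 1)).deriv

end DihedralQAux

open DihedralQAux in
/-- `𝔔` satisfies the vector Helmholtz equation `Δ𝔔 = -𝔔` componentwise
and is solenoidal. -/
theorem dihedral_Q_helmholtz_solenoidal :
    (∀ v, lap2 (fun w => Qfield w 0) v = -(Qfield v 0)) ∧
    (∀ v, lap2 (fun w => Qfield w 1) v = -(Qfield v 1)) ∧
    (∀ v, div2 Qfield v = 0) := by
  refine ⟨fun v => ?_, fun v => ?_, fun v => ?_⟩
  · have : Qfield v 0 = Qx (v 0) (v 1) := rfl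
    rw [lap2, pd0_Q0, pd1_Q0, pd0_Dx, pd1_Dy, this]
    exact helm (v 0) (v 1)
  · have : Qfield v 1 = Qx (v 1) (v 0) := rfl
    rw [lap2, pd0_Q1, pd1_Q1, pd0_Dy', pd1_Dx', this]
    have := helm (v 1) (v 0)
    linarith [helm (v 1) (v 0)]
  · rw [div2, pd0_Q0, pd1_Q1]
    exact divzero (v 0) (v 1)
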